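/- Let G be an infinite profinite group and let 𝒩 denote the set of open normal subgroups of G. For each H ∈ 𝒩 let ε_H : ℤ[G/H] → ℤ be the augmentation map. Then the constant all-1 family (1)_{H∈𝒩} ∈ ∏_{H∈𝒩} ℤ is not in the image, under the product map ∏_{H∈𝒩} ε_H, of the set of elements x = (x_H)_{H∈𝒩} ∈ ∏_{H∈𝒩} ℤ[G/H] for which there exists an open normal subgroup K of G fixing x componentwise. (In other words, the product in the category of discrete G-modules of the augmentation epimorphisms ℤ[G/H] → ℤ is not an epimorphism.) -/

import Mathlib

set_option linter.unnecessarySimpa false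
private lemma orderOf_dvd_sum_of_invariant {Q : Type} [Group Q] [Fintype Q] (a : Q) (f : Q → ℤ)
    (hf : ∀ q, f (a * q) = f q) : (orderOf a : ℤ) ∣ ∑ q, f q := by
  classical
  set Z := Subgroup.zpowers a with hZdef
  have hpow : ∀ k : ℤ, ∀ q, f (a ^ k * q) = f q := by
    intro k
    induction k using Int.induction_on with
    | zero => simp
    | succ n ih =>
        intro q
        rw [show ((n : ℤ) + 1) = 1 + (n : ℤ) from add_comm _ _, zpow_add, zpow_one,
          mul_assoc, hf, ih]
    | pred n ih =>
        intro q
        have finv : ∀ r, f (a⁻¹ * r) = f r := fun r => by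
          have := hf (a⁻¹ * r); rw [mul_inv_cancel_left] at this; exact this.symm
        rw [show (-(n : ℤ) - 1) = -1 + -(n : ℤ) by ring, zpow_add, zpow_neg_one,
          mul_assoc, finv, ih]
  have hZinv : ∀ z ∈ Z, ∀ q, f (z * q) = f q := by
    intro z hz q
    obtain ⟨k, rfl⟩ := Subgroup.mem_zpowers_iff.mp hz
    exact hpow k q
  set g : Q → ℤ := fun q => f q⁻¹ with hgdef
  have hsum : ∑ q, f q = ∑ q, g q :=
    (Fintype.sum_equiv (Equiv.inv Q) _ _ (fun q => by simp [hgdef])).symm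
  have hg : ∀ q r : Q, (QuotientGroup.mk q : Q ⧸ Z) = QuotientGroup.mk r → g q = g r := by
    intro q r h
    have hmem : q⁻¹ * r ∈ Z := QuotientGroup.eq.mp h
    have h2 : q⁻¹ = (q⁻¹ * r) * r⁻¹ := by group
    show f q⁻¹ = f r⁻¹
    rw [h2, hZinv _ hmem]
  have key : ∑ q, g q = ∑ c : Q ⧸ Z, (orderOf a : ℤ) * g (Quotient.out c) := by
    rw [← Equiv.sum_comp (Equiv.sigmaFiberEquiv (QuotientGroup.mk : Q → Q ⧸ Z)) g,
      ← Finset.univ_sigma_univ, Finset.sum_sigma]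
    refine Fintype.sum_congr _ _ fun c => ?_
    have hconst : ∀ p : {q : Q // (QuotientGroup.mk q : Q ⧸ Z) = c},
        g ((Equiv.sigmaFiberEquiv (QuotientGroup.mk : Q → Q ⧸ Z)) ⟨c, p⟩) = g (Quotient.out c) :=
      fun p => hg p.1 (Quotient.out c) (by rw [p.2]; simp)
    rw [Finset.sum_congr rfl (fun p _ => hconst p), Finset.sum_const, nsmul_eq_mul]
    congr 1
    have e : {q : Q // (QuotientGroup.mk q : Q ⧸ Z) = c} ≃ Z :=
      { toFun := fun p => ⟨(Quotient.out c)⁻¹ * p.1, QuotientGroup.eq.mp (by rw [p.2]; simp)⟩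
        invFun := fun z => ⟨Quotient.out c * z.1, by
          have h3 : (QuotientGroup.mk (Quotient.out c * z.1) : Q ⧸ Z)
              = QuotientGroup.mk (Quotient.out c) := (QuotientGroup.eq.mpr (by simpa using z.2)).symm
          rw [h3]; simp⟩
        left_inv := fun p => by ext; group
        right_inv := fun z => by ext; group }
    rw [Finset.card_univ, Fintype.card_congr e]
    rw [← Nat.card_eq_fintype_card, Nat.card_zpowers]
  rw [hsum, key, ← Finset.mul_sum]
  exact Dvd.intro _ rfl




/-- **(Chirvasitu–Kanda, Proposition 2.2, key step.)** Let `G` be an infinite profinite group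
and `𝒩` its set of open normal subgroups. The constant all-`1` family in `∏_{H ∈ 𝒩} ℤ` is
not the image, under the product of the augmentation maps `ε_H : ℤ[G/H] → ℤ`, of any family
`(x_H) ∈ ∏_{H ∈ 𝒩} ℤ[G/H]` fixed componentwise by a single open normal subgroup `K` (i.e. of
any element of the product of the `ℤ[G/H]` computed in the category of discrete
`G`-modules). -/
theorem stmt_12 (G : Type) [Group G] [TopologicalSpace G] [IsTopologicalGroup G]
    [CompactSpace G] [T2Space G] [TotallyDisconnectedSpace G] [Infinite G] :
    ¬ ∃ x : ∀ H : {H : Subgroup G // H.Normal ∧ IsOpen (H : Set G)}, (G ⧸ H.1) →₀ ℤ,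
        (∃ K : Subgroup G, K.Normal ∧ IsOpen (K : Set G) ∧
          ∀ (H : {H : Subgroup G // H.Normal ∧ IsOpen (H : Set G)}), ∀ g ∈ K,
            Finsupp.mapDomain (fun c : G ⧸ H.1 => g • c) (x H) = x H) ∧
        ∀ H : {H : Subgroup G // H.Normal ∧ IsOpen (H : Set G)},
          ((x H).sum fun _ n => n) = 1 := by
  classical
  rintro ⟨x, ⟨K, hKn, hKo, hK⟩, hsum⟩
  -- K is infinite
  have hfinQK : Finite (G ⧸ K) := Subgroup.quotient_finite_of_isOpen K hKo
  have hKinf : Infinite K := by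
    by_contra hfin
    rw [not_infinite_iff_finite] at hfin
    have : Finite G := Finite.of_equiv _ (Subgroup.groupEquivQuotientProdSubgroup (s := K)).symm
    exact not_finite G
  -- pick g ∈ K, g ≠ 1
  obtain ⟨g, hgK, hg1⟩ : ∃ g ∈ K, g ≠ (1 : G) := by
    rcases K.bot_or_exists_ne_one with h | h
    · exfalso
      rw [h] at hKinf
      exact not_finite (⊥ : Subgroup G)
    · exact h
  -- find an open normal subgroup N with g ∉ N
  obtain ⟨W, ⟨h1W, hWclopen⟩, hWsub⟩ :=
    (nhds_basis_clopen (1 : G)).mem_iff.mp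
      (IsOpen.mem_nhds (isOpen_compl_singleton (x := g)) (by simpa using hg1.symm))
  obtain ⟨N, hN⟩ :=
    IsTopologicalGroup.exist_openNormalSubgroup_sub_clopen_nhds_of_one hWclopen h1W
  have hgN : g ∉ N.toSubgroup := fun h => hWsub (hN h) rfl
  -- H := K ⊓ N
  set Hs : Subgroup G := K ⊓ N.toSubgroup with hHs
  have hHnormal : Hs.Normal := by
    have := hKn
    have := N.isNormal'
    exact Subgroup.normal_inf_normal K N.toSubgroup
  have hHopen : IsOpen (Hs : Set G) := by
    rw [hHs, Subgroup.coe_inf]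
    exact hKo.inter N.isOpen'
  set H : {H : Subgroup G // H.Normal ∧ IsOpen (H : Set G)} := ⟨Hs, hHnormal, hHopen⟩ with hHdef
  have hgH : g ∉ Hs := fun h => hgN h.2
  -- the quotient is a finite group
  have hfinQ : Finite (G ⧸ Hs) := Subgroup.quotient_finite_of_isOpen Hs hHopen
  have : Fintype (G ⧸ Hs) := Fintype.ofFinite _
  set a : G ⧸ Hs := QuotientGroup.mk g with hadef
  have ha1 : a ≠ 1 := fun h => hgH ((QuotientGroup.eq_one_iff g).mp h)
  -- invariance of the coefficient function
  set f : (G ⧸ Hs) → ℤ := fun q => x H q with hfdef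
  have hinj : Function.Injective (fun c : G ⧸ Hs => g • c) :=
    MulAction.injective g
  have hfix := hK H g hgK
  have hf : ∀ q, f (a * q) = f q := by
    intro q
    induction q using QuotientGroup.induction_on with
    | H c =>
      have h1 : a * (QuotientGroup.mk c : G ⧸ Hs) = g • (QuotientGroup.mk c) := rfl
      rw [h1]
      show x H (g • (QuotientGroup.mk c : G ⧸ Hs)) = x H (QuotientGroup.mk c)
      conv_lhs => rw [← hfix]
      exact Finsupp.mapDomain_apply hinj (x H) (QuotientGroup.mk c)
  -- augmentation sum
  have hsumH : ∑ q : G ⧸ Hs, f q = 1 := by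
    rw [← hsum H]
    exact (Finsupp.sum_fintype (x H) (fun _ n => n) (fun _ => rfl)).symm
  have hdvd := orderOf_dvd_sum_of_invariant a f hf
  rw [hsumH] at hdvd
  have : orderOf a = 1 := by exact_mod_cast Int.eq_one_of_dvd_one (by positivity) hdvd
  exact ha1 (orderOf_eq_one_iff.mp this)
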